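/- Every finite simple graph belonging to the class SC is vertex decomposable. -/

import Mathlib

open SimpleGraph

variable {V : Type*} {W : Type*}

/-- The open neighborhood `N(x)` of a vertex, as a set. -/
def nbhd (G : SimpleGraph V) (x : V) : Set V := {u | G.Adj x u}

/-- The closed neighborhood `N[x]` of a vertex. -/
def closedNbhd (G : SimpleGraph V) (x : V) : Set V := insert x {u | G.Adj x u}

/-- The degree of a vertex. -/
noncomputable def deg (G : SimpleGraph V) (x : V) : ℕ := (nbhd G x).ncard

/-- `S` is an independent set of vertices of `G`. -/
def IsIndep (G : SimpleGraph V) (S : Set V) : Prop :=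
  ∀ u ∈ S, ∀ w ∈ S, ¬ G.Adj u w

/-- `S` is an independent set contained in `A`, i.e. an independent set of the
induced subgraph of `G` on `A`. -/
def IsIndepOn (G : SimpleGraph V) (A S : Set V) : Prop :=
  S ⊆ A ∧ IsIndep G S

/-- `S` is a maximal independent set of the induced subgraph of `G` on `A`. -/
def IsMaxIndepOn (G : SimpleGraph V) (A S : Set V) : Prop :=
  IsIndepOn G A S ∧ ∀ T : Set V, IsIndepOn G A T → S ⊆ T → S = T

/-- A graph is well-covered if all its maximal independent sets have the same
cardinality. -/
def WellCovered (G : SimpleGraph V) : Prop :=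
  ∀ S T : Set V, IsMaxIndepOn G Set.univ S → IsMaxIndepOn G Set.univ T →
    S.ncard = T.ncard

/-- The independence number `α(G)` of a graph. -/
noncomputable def indepNum (G : SimpleGraph V) : ℕ :=
  sSup {n : ℕ | ∃ S : Set V, IsIndep G S ∧ S.ncard = n}

/-- `VDOn G A` means: the induced subgraph of `G` on `A` is vertex decomposable,
via the recursive graph-theoretic characterization: it has no edges, or there is
a vertex `v ∈ A` such that both `G∖v` and `G∖N[v]` (within `A`) are vertex
decomposable and no independent set of `G∖N[v]` is a maximal independent set
of `G∖v`. -/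
inductive VDOn (G : SimpleGraph V) : Set V → Prop
  | no_edges (A : Set V) (h : ∀ u ∈ A, ∀ w ∈ A, ¬ G.Adj u w) : VDOn G A
  | step (A : Set V) (v : V) (hv : v ∈ A)
      (hdel : VDOn G (A \ {v}))
      (hlk : VDOn G (A \ closedNbhd G v))
      (hshed : ∀ S : Set V, IsIndepOn G (A \ closedNbhd G v) S →
        ¬ IsMaxIndepOn G (A \ {v}) S) : VDOn G A

/-- A graph is vertex decomposable. -/
def VertexDecomposable (G : SimpleGraph V) : Prop := VDOn G Set.univ

/-- `c` lists the vertices of an `n`-cycle of `G` in cyclic order. -/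
def IsCycleMap {n : ℕ} (G : SimpleGraph V) (c : ZMod n → V) : Prop :=
  Function.Injective c ∧ ∀ i : ZMod n, G.Adj (c i) (c (i + 1))

/-- A vertex is simplicial if its closed neighborhood induces a complete graph. -/
def IsSimplicial (G : SimpleGraph V) (x : V) : Prop :=
  ∀ u w : V, G.Adj x u → G.Adj x w → u ≠ w → G.Adj u w

/-- A basic 5-cycle: a 5-cycle containing no two adjacent vertices that both
have degree at least 3 in `G`. -/
def IsBasic5Cycle (G : SimpleGraph V) (c : ZMod 5 → V) : Prop :=
  IsCycleMap G c ∧ ∀ i : ZMod 5, ¬(3 ≤ deg G (c i) ∧ 3 ≤ deg G (c (i + 1)))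

/-- A basic 3-cycle: a 3-cycle containing at least one vertex of degree 2. -/
def IsBasic3Cycle (G : SimpleGraph V) (c : ZMod 3 → V) : Prop :=
  IsCycleMap G c ∧ ∃ i : ZMod 3, deg G (c i) = 2

/-- `x` belongs to a simplex of `G`, i.e. to the closed neighborhood of a
simplicial vertex. -/
def InSimplex (G : SimpleGraph V) (x : V) : Prop :=
  ∃ v : V, IsSimplicial G v ∧ x ∈ closedNbhd G v

/-- `x` lies on a basic 5-cycle of `G`. -/
def OnBasic5Cycle (G : SimpleGraph V) (x : V) : Prop :=
  ∃ c : ZMod 5 → V, IsBasic5Cycle G c ∧ x ∈ Set.range c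

/-- A basic 4-cycle, labelled so that `c 0` and `c 1` are two adjacent vertices
of degree two, and the remaining two vertices `c 2`, `c 3` each belong to a
simplex or to a basic 5-cycle of `G`.  The set `B(Q)` of such a labelled basic
4-cycle is `{c 0, c 1}`. -/
def IsBasic4Cycle (G : SimpleGraph V) (c : ZMod 4 → V) : Prop :=
  IsCycleMap G c ∧ deg G (c 0) = 2 ∧ deg G (c 1) = 2 ∧
    (InSimplex G (c 2) ∨ OnBasic5Cycle G (c 2)) ∧
    (InSimplex G (c 3) ∨ OnBasic5Cycle G (c 3))

/-- The class `SQC`: the vertex set is partitioned by the closed neighborhoods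
of `m` simplicial vertices, the vertex sets of `s` basic 5-cycles and the sets
`B(Q)` of `t` basic 4-cycles. -/
def InSQC (G : SimpleGraph V) : Prop :=
  ∃ (m s t : ℕ) (x : Fin m → V) (c : Fin s → ZMod 5 → V) (q : Fin t → ZMod 4 → V),
    (∀ i, IsSimplicial G (x i)) ∧
    (∀ j, IsBasic5Cycle G (c j)) ∧
    (∀ k, IsBasic4Cycle G (q k)) ∧
    (∀ v : V, ∃! p : Fin m ⊕ Fin s ⊕ Fin t,
      match p with
      | Sum.inl i => v ∈ closedNbhd G (x i)
      | Sum.inr (Sum.inl j) => v ∈ Set.range (c j)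
      | Sum.inr (Sum.inr k) => v = q k 0 ∨ v = q k 1)

/-- The class `SC`: the vertex set is partitioned by the closed neighborhoods
of `m` simplicial vertices and the vertex sets of `s` basic 5-cycles. -/
def InSC (G : SimpleGraph V) : Prop :=
  ∃ (m s : ℕ) (x : Fin m → V) (c : Fin s → ZMod 5 → V),
    (∀ i, IsSimplicial G (x i)) ∧
    (∀ j, IsBasic5Cycle G (c j)) ∧
    (∀ v : V, ∃! p : Fin m ⊕ Fin s,
      match p with
      | Sum.inl i => v ∈ closedNbhd G (x i)
      | Sum.inr j => v ∈ Set.range (c j))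

/-- `{u, w}` is a pendant edge of `G`: an edge incident with a vertex of
degree 1. -/
def PendantEdge (G : SimpleGraph V) (u w : V) : Prop :=
  G.Adj u w ∧ (deg G u = 1 ∨ deg G w = 1)

/-- `P(G)`: vertices incident with pendant edges. -/
def pendantVerts (G : SimpleGraph V) : Set V := {v | ∃ u, PendantEdge G v u}

/-- `C(G)`: vertices lying on basic 5-cycles. -/
def basic5Verts (G : SimpleGraph V) : Set V := {v | OnBasic5Cycle G v}

/-- The class `PC`: `V(G) = P(G) ∪ C(G)` with `P(G) ∩ C(G) = ∅`, the basic
5-cycles partition `C(G)` (i.e. are pairwise vertex-disjoint), and the pendant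
edges form a perfect matching of `P(G)`. -/
def InPC (G : SimpleGraph V) : Prop :=
  pendantVerts G ∪ basic5Verts G = Set.univ ∧
  pendantVerts G ∩ basic5Verts G = ∅ ∧
  (∀ c c' : ZMod 5 → V, IsBasic5Cycle G c → IsBasic5Cycle G c' →
    Set.range c = Set.range c' ∨ Disjoint (Set.range c) (Set.range c')) ∧
  (∀ v ∈ pendantVerts G, ∃! u : V, PendantEdge G v u)

/-- The induced subgraph of `G` on `B` has no cut vertex: removing any vertex
of `B` leaves it (pre)connected. -/
def NoCutVertexOn (G : SimpleGraph V) (B : Set V) : Prop :=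
  ∀ v ∈ B, (G.induce (B \ {v})).Preconnected

/-- `B` is (the vertex set of) a block of `G`: a maximal connected induced
subgraph without a cut vertex. -/
def IsBlockOf (G : SimpleGraph V) (B : Set V) : Prop :=
  B.Nonempty ∧ (G.induce B).Connected ∧ NoCutVertexOn G B ∧
  ∀ B' : Set V, B ⊆ B' → (G.induce B').Connected → NoCutVertexOn G B' → B' = B

/-- The induced subgraph of `G` on `B` is complete. -/
def IsCompleteOn (G : SimpleGraph V) (B : Set V) : Prop :=
  ∀ u ∈ B, ∀ w ∈ B, u ≠ w → G.Adj u w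

/-- The induced subgraph of `G` on `B` is a cycle. -/
def IsCycleOn (G : SimpleGraph V) (B : Set V) : Prop :=
  ∃ n : ℕ, 3 ≤ n ∧ ∃ c : ZMod n → V, Function.Injective c ∧ Set.range c = B ∧
    ∀ i j : ZMod n, G.Adj (c i) (c j) ↔ (j = i + 1 ∨ i = j + 1)

/-- A block-cactus graph: every block is complete or a cycle. -/
def IsBlockCactus (G : SimpleGraph V) : Prop :=
  ∀ B : Set V, IsBlockOf G B → IsCompleteOn G B ∨ IsCycleOn G B

/-- A cactus graph: connected, and any two (distinct) cycles have at most one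
vertex in common. -/
def IsCactus (G : SimpleGraph V) : Prop :=
  G.Connected ∧
  ∀ (n m : ℕ), 3 ≤ n → 3 ≤ m → ∀ (c : ZMod n → V) (c' : ZMod m → V),
    IsCycleMap G c → IsCycleMap G c' →
    Set.range c = Set.range c' ∨ (Set.range c ∩ Set.range c').Subsingleton

/-- `S` is a pendant edge of `G` incident with `v`. -/
def IncidentPendant (G : SimpleGraph V) (v : V) (S : Set V) : Prop :=
  ∃ u, PendantEdge G v u ∧ S = {v, u}

/-- `S` is (the vertex set of) a basic 3-cycle of `G` through `v`. -/
def IncidentBasic3 (G : SimpleGraph V) (v : V) (S : Set V) : Prop :=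
  ∃ c : ZMod 3 → V, IsBasic3Cycle G c ∧ Set.range c = S ∧ v ∈ S

/-- `S` is (the vertex set of) a basic 4-cycle of `G` through `v`. -/
def IncidentBasic4 (G : SimpleGraph V) (v : V) (S : Set V) : Prop :=
  ∃ c : ZMod 4 → V, IsBasic4Cycle G c ∧ Set.range c = S ∧ v ∈ S

/-- `S` is (the vertex set of) a basic 5-cycle of `G` through `v`. -/
def IncidentBasic5 (G : SimpleGraph V) (v : V) (S : Set V) : Prop :=
  ∃ c : ZMod 5 → V, IsBasic5Cycle G c ∧ Set.range c = S ∧ v ∈ S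

/-- `H` is a minor of `G`, witnessed by pairwise disjoint connected branch
sets. -/
def IsMinorOf (H : SimpleGraph W) (G : SimpleGraph V) : Prop :=
  ∃ f : W → Set V,
    (∀ w, (G.induce (f w)).Connected) ∧
    (∀ w w', w ≠ w' → Disjoint (f w) (f w')) ∧
    (∀ w w', H.Adj w w' → ∃ a ∈ f w, ∃ b ∈ f w', G.Adj a b)

/-- Planarity, via Wagner's characterization: a graph is planar iff it has
neither `K₅` nor `K₃,₃` as a minor. -/
def IsPlanar (G : SimpleGraph V) : Prop :=
  ¬ IsMinorOf (⊤ : SimpleGraph (Fin 5)) G ∧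
  ¬ IsMinorOf (completeBipartiteGraph (Fin 3) (Fin 3)) G

/-- The class `W₂`: a well-covered graph such that deleting any vertex leaves a
well-covered graph with the same independence number. -/
def InW2 (G : SimpleGraph V) : Prop :=
  WellCovered G ∧ ∀ x : V,
    WellCovered (G.induce ({x}ᶜ : Set V)) ∧
    _root_.indepNum (G.induce ({x}ᶜ : Set V)) = _root_.indepNum G

/-- The edge relation of the graph `G_n`, on vertex labels `1, …, 3n-1`
(the vertex `x_i` has label `i`). -/
def gnRel (n : ℕ) (a b : ℕ) : Prop :=
  (a = 1 ∧ b = 2) ∨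
  (∃ k : ℕ, 1 ≤ k ∧ k ≤ n - 1 ∧
    ((a = 3 * k - 1 ∧ b = 3 * k) ∨ (a = 3 * k ∧ b = 3 * k + 1) ∨
     (a = 3 * k + 1 ∧ b = 3 * k + 2) ∨ (a = 3 * k + 2 ∧ b = 3 * k - 2))) ∨
  (∃ l : ℕ, 2 ≤ l ∧ l ≤ n - 1 ∧ a = 3 * l - 3 ∧ b = 3 * l)

/-- The graph `G_n`, with vertex set `{x_1, …, x_{3n-1}}`; the vertex `x_i` is
represented by the element of `Fin (3*n-1)` with value `i - 1`. -/
def Gn (n : ℕ) : SimpleGraph (Fin (3 * n - 1)) :=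
  SimpleGraph.fromRel (fun a b => gnRel n (a.1 + 1) (b.1 + 1))

/-- The graph `H_n = G_n ∖ x_{3n-1}`, with vertex set `{x_1, …, x_{3n-2}}`;
the vertex `x_i` is represented by the element of `Fin (3*n-2)` with value
`i - 1`. -/
def Hn (n : ℕ) : SimpleGraph (Fin (3 * n - 2)) :=
  SimpleGraph.fromRel (fun a b => gnRel n (a.1 + 1) (b.1 + 1))

section SCProof

variable {V : Type*} [Fintype V] {G : SimpleGraph V}

set_option linter.unusedSectionVars false

lemma mem_closedNbhd_iff {v u : V} : u ∈ closedNbhd G v ↔ u = v ∨ G.Adj v u := by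
  simp [closedNbhd]

lemma adj_mem_closedNbhd {v u : V} (h : G.Adj v u) : u ∈ closedNbhd G v :=
  mem_closedNbhd_iff.2 (Or.inr h)

lemma self_mem_closedNbhd (G : SimpleGraph V) (v : V) : v ∈ closedNbhd G v :=
  mem_closedNbhd_iff.2 (Or.inl rfl)

lemma mem_nbhd_iff {v u : V} : u ∈ nbhd G v ↔ G.Adj v u := Iff.rfl

lemma two_le_deg {w a b : V} (ha : G.Adj w a) (hb : G.Adj w b) (hab : a ≠ b) :
    2 ≤ deg G w := by
  have hsub : ({a, b} : Set V) ⊆ nbhd G w := by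
    rintro x (rfl | rfl) <;> assumption
  have := Set.ncard_le_ncard hsub (Set.toFinite _)
  rwa [Set.ncard_pair hab] at this

lemma three_le_deg {w a b d : V} (ha : G.Adj w a) (hb : G.Adj w b) (hd : G.Adj w d)
    (hab : a ≠ b) (had : a ≠ d) (hbd : b ≠ d) : 3 ≤ deg G w := by
  have hsub : ({a, b, d} : Set V) ⊆ nbhd G w := by
    rintro x (rfl | rfl | rfl) <;> assumption
  have := Set.ncard_le_ncard hsub (Set.toFinite _)
  have h3 : ({a, b, d} : Set V).ncard = 3 := by
    rw [Set.ncard_insert_of_notMem (by simp [had, hab]), Set.ncard_pair hbd]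
  rw [h3] at this; exact this

lemma nbhd_eq_pair {w a b : V} (hdeg : deg G w = 2) (ha : G.Adj w a) (hb : G.Adj w b)
    (hab : a ≠ b) : nbhd G w = {a, b} := by
  have hsub : ({a, b} : Set V) ⊆ nbhd G w := by
    rintro x (rfl | rfl) <;> assumption
  refine (Set.eq_of_subset_of_ncard_le hsub ?_ (Set.toFinite _)).symm
  rw [Set.ncard_pair hab, ← hdeg]; rfl

/-- Relative simpliciality on `A`. -/
def RelSimp (G : SimpleGraph V) (A : Set V) (x : V) : Prop :=
  ∀ u ∈ A, ∀ w ∈ A, G.Adj x u → G.Adj x w → u ≠ w → G.Adj u w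

/-- The block of a clique centre. -/
def Blk (G : SimpleGraph V) (A : Set V) (x : V) : Set V := closedNbhd G x ∩ A

lemma relSimp_mono {A A' : Set V} (h : A' ⊆ A) {x : V} (hx : RelSimp G A x) :
    RelSimp G A' x := fun u hu w hw => hx u (h hu) w (h hw)

lemma blk_mono {A A' : Set V} (h : A' ⊆ A) (x : V) : Blk G A' x ⊆ Blk G A x :=
  fun _ hu => ⟨hu.1, h hu.2⟩

lemma self_mem_blk {A : Set V} {x : V} (hx : x ∈ A) : x ∈ Blk G A x :=
  ⟨self_mem_closedNbhd G x, hx⟩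

/-- The invariant: `A` is partitioned into clique blocks with relatively
simplicial centres and basic 5-cycles. -/
structure GoodData (G : SimpleGraph V) (A : Set V) (X : Set V)
    (CS : Set (ZMod 5 → V)) : Prop where
  hX : ∀ x ∈ X, x ∈ A ∧ RelSimp G A x
  hCS : ∀ c ∈ CS, IsBasic5Cycle G c ∧ Set.range c ⊆ A
  cover : ∀ v ∈ A, (∃ x ∈ X, v ∈ Blk G A x) ∨ (∃ c ∈ CS, v ∈ Set.range c)
  dXX : ∀ x ∈ X, ∀ x' ∈ X, ∀ v, v ∈ Blk G A x → v ∈ Blk G A x' → x = x'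
  dCC : ∀ c ∈ CS, ∀ c' ∈ CS, ∀ v, v ∈ Set.range c → v ∈ Set.range c' → c = c'
  dXC : ∀ x ∈ X, ∀ c ∈ CS, ∀ v, v ∈ Blk G A x → v ∉ Set.range c

def Good (G : SimpleGraph V) (A : Set V) : Prop := ∃ X CS, GoodData G A X CS

/-! ### ZMod 5 helpers -/

lemma zmod5_cases (i k : ZMod 5) :
    k = i ∨ k = i + 1 ∨ k = i + 2 ∨ k = i + 3 ∨ k = i + 4 := by
  have h : ∀ d : ZMod 5, d = 0 ∨ d = 1 ∨ d = 2 ∨ d = 3 ∨ d = 4 := by decide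
  have hk : k = i + (k - i) := by ring
  rcases h (k - i) with h' | h' | h' | h' | h' <;> rw [h'] at hk <;>
    first
    | (rw [add_zero] at hk; tauto)
    | tauto

/-! ### Cycle lemmas -/

lemma cyc_adj {c : ZMod 5 → V} (hc : IsBasic5Cycle G c) (i : ZMod 5) :
    G.Adj (c i) (c (i + 1)) := hc.1.2 i

lemma cyc_adj' {c : ZMod 5 → V} (hc : IsBasic5Cycle G c) (i : ZMod 5) :
    G.Adj (c (i + 1)) (c i) := (hc.1.2 i).symm

lemma cyc_ne {c : ZMod 5 → V} (hc : IsBasic5Cycle G c) {i j : ZMod 5} (h : i ≠ j) :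
    c i ≠ c j := fun he => h (hc.1.1 he)

lemma zadd_cancel_ne {i a b : ZMod 5} (h : a ≠ b) : i + a ≠ i + b :=
  fun he => h (by have := add_left_cancel he; exact this)

lemma cyc_adj_pred {c : ZMod 5 → V} (hc : IsBasic5Cycle G c) (i : ZMod 5) :
    G.Adj (c i) (c (i + 4)) := by
  have h45 : i + 4 + 1 = i := by
    have : (4 : ZMod 5) + 1 = 0 := by decide
    rw [add_assoc, this, add_zero]
  have := cyc_adj' hc (i + 4)
  rwa [h45] at this

lemma cyc_two_le_deg {c : ZMod 5 → V} (hc : IsBasic5Cycle G c) (i : ZMod 5) :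
    2 ≤ deg G (c i) := by
  refine two_le_deg (cyc_adj hc i) (cyc_adj_pred hc i) (cyc_ne hc ?_)
  exact zadd_cancel_ne (by decide)

lemma cyc_deg_eq_two {c : ZMod 5 → V} (hc : IsBasic5Cycle G c) {i : ZMod 5}
    (h : ¬ 3 ≤ deg G (c i)) : deg G (c i) = 2 := by
  have := cyc_two_le_deg hc i; omega

/-- basic: a neighbour (on the cycle) of a degree-≥3 vertex has degree 2. -/
lemma cyc_succ_deg_two {c : ZMod 5 → V} (hc : IsBasic5Cycle G c) {i : ZMod 5}
    (h : 3 ≤ deg G (c i)) : deg G (c (i + 1)) = 2 := by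
  refine cyc_deg_eq_two hc fun h3 => hc.2 i ⟨h, h3⟩

lemma cyc_pred_deg_two {c : ZMod 5 → V} (hc : IsBasic5Cycle G c) {i : ZMod 5}
    (h : 3 ≤ deg G (c i)) : deg G (c (i + 4)) = 2 := by
  refine cyc_deg_eq_two hc fun h3 => hc.2 (i + 4) ⟨h3, ?_⟩
  have h45 : i + 4 + 1 = i := by
    have : (4 : ZMod 5) + 1 = 0 := by decide
    rw [add_assoc, this, add_zero]
  rwa [h45]

/-- The neighbourhood of a degree-2 cycle vertex is exactly its two cycle
neighbours. -/
lemma cyc_nbhd {c : ZMod 5 → V} (hc : IsBasic5Cycle G c) {i : ZMod 5}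
    (h : deg G (c i) = 2) : nbhd G (c i) = {c (i + 1), c (i + 4)} :=
  nbhd_eq_pair h (cyc_adj hc i) (cyc_adj_pred hc i)
    (cyc_ne hc (zadd_cancel_ne (by decide)))

/-- A cycle vertex adjacent to an outside vertex has degree ≥ 3. -/
lemma cyc_out_deg {c : ZMod 5 → V} (hc : IsBasic5Cycle G c) {i : ZMod 5} {v : V}
    (hv : v ∉ Set.range c) (h : G.Adj (c i) v) : 3 ≤ deg G (c i) := by
  refine three_le_deg (cyc_adj hc i) (cyc_adj_pred hc i) h
    (cyc_ne hc (zadd_cancel_ne (by decide))) ?_ ?_ <;>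
    exact fun he => hv ⟨_, he⟩

/-! ### Boolean combinatorics on `ZMod 5` for damaged cycles -/

def ctrB (p : ZMod 5 → Bool) (j : ZMod 5) : Bool :=
  !p j && (p (j - 1) || (p (j + 1) && !p (j + 3)))

def blkB (p : ZMod 5 → Bool) (j k : ZMod 5) : Bool :=
  !p k && (k == j || k == j - 1 || k == j + 1)

lemma ctrB_cover : ∀ p : ZMod 5 → Bool, (∃ k, p k = true) →
    (∀ k, ¬(p k = true ∧ p (k + 1) = true)) →
    ∀ k, p k = false → ∃ j, ctrB p j = true ∧ blkB p j k = true := by decide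

lemma ctrB_disj : ∀ p : ZMod 5 → Bool,
    (∀ k, ¬(p k = true ∧ p (k + 1) = true)) →
    ∀ j j' k, ctrB p j = true → ctrB p j' = true →
      blkB p j k = true → blkB p j' k = true → j = j' := by decide

lemma ctrB_spec : ∀ p : ZMod 5 → Bool, ∀ j, ctrB p j = true →
    p j = false ∧ (p (j - 1) = true ∨ p (j + 1) = true) := by decide

lemma blkB_spec : ∀ p : ZMod 5 → Bool, ∀ j k, blkB p j k = true →
    p k = false ∧ (k = j ∨ k = j - 1 ∨ k = j + 1) := by decide

lemma blkB_of : ∀ p : ZMod 5 → Bool, ∀ j k, p k = false →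
    (k = j ∨ k = j - 1 ∨ k = j + 1) → blkB p j k = true := by decide

lemma ctrB_spec' : ∀ p : ZMod 5 → Bool, ∀ j, ctrB p j = true →
    p j = false ∧ (p (j - 1) = true ∨ (p (j + 1) = true ∧ p (j + 3) = false)) := by
  decide

lemma ctrB_of : ∀ p : ZMod 5 → Bool, ∀ j, p j = false →
    (p (j - 1) = true ∨ (p (j + 1) = true ∧ p (j + 3) = false)) → ctrB p j = true := by
  decide

/-- Fragment centres of a damaged cycle. -/
def FragC (G : SimpleGraph V) (v : V) (c : ZMod 5 → V) (w : V) : Prop :=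
  ∃ j : ZMod 5, w = c j ∧ c j ∉ closedNbhd G v ∧
    (c (j - 1) ∈ closedNbhd G v ∨
      (c (j + 1) ∈ closedNbhd G v ∧ c (j + 3) ∉ closedNbhd G v))

lemma zsub_one (j : ZMod 5) : j - 1 = j + 4 := by
  have h : (-1 : ZMod 5) = 4 := by decide
  rw [sub_eq_add_neg, h]

lemma zadd14 (j : ZMod 5) : j + 1 + 4 = j := by
  have h : (1 : ZMod 5) + 4 = 0 := by decide
  rw [add_assoc, h, add_zero]

lemma zsub_add (j : ZMod 5) : j - 1 + 1 = j := sub_add_cancel j 1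

section Frag

variable {A : Set V} {v : V} {c : ZMod 5 → V}

/-- All facts about the fragment decomposition of a damaged cycle. -/
lemma frag_all (hc : IsBasic5Cycle G c) (hcA : Set.range c ⊆ A)
    (hvc : v ∉ Set.range c) :
    (∀ w, FragC G v c w → w ∈ A \ closedNbhd G v ∧
        RelSimp G (A \ closedNbhd G v) w ∧
        Blk G (A \ closedNbhd G v) w ⊆ Set.range c \ closedNbhd G v) ∧
    (∀ u ∈ Set.range c, u ∉ closedNbhd G v → (∃ k, c k ∈ closedNbhd G v) →
        ∃ w, FragC G v c w ∧ u ∈ Blk G (A \ closedNbhd G v) w) ∧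
    (∀ w w', FragC G v c w → FragC G v c w' →
        ∀ u, u ∈ Blk G (A \ closedNbhd G v) w → u ∈ Blk G (A \ closedNbhd G v) w' →
          w = w') := by
  classical
  set N := closedNbhd G v with hN
  set p : ZMod 5 → Bool := fun k => decide (c k ∈ N) with hpdef
  have hp : ∀ k, p k = true ↔ c k ∈ N := by intro k; simp [hpdef]
  have hp' : ∀ k, p k = false ↔ c k ∉ N := by
    intro k; rw [← hp k]; cases p k <;> simp
  -- damaged vertices have degree ≥ 3
  have hdam3 : ∀ k, c k ∈ N → 3 ≤ deg G (c k) := by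
    intro k hk
    rcases mem_closedNbhd_iff.1 hk with he | ha
    · exact absurd ⟨k, he⟩ hvc
    · exact cyc_out_deg hc hvc ha.symm
  have nocons : ∀ k, ¬(p k = true ∧ p (k + 1) = true) := by
    rintro k ⟨h1, h2⟩
    exact hc.2 k ⟨hdam3 k ((hp k).1 h1), hdam3 (k + 1) ((hp (k + 1)).1 h2)⟩
  -- centres have degree 2
  have hdeg2 : ∀ j, p j = false → (p (j - 1) = true ∨ p (j + 1) = true) →
      deg G (c j) = 2 := by
    rintro j hj (h1 | h1)
    · have h3 := hdam3 _ ((hp _).1 h1)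
      have := cyc_succ_deg_two hc h3
      rwa [zsub_add] at this
    · have h3 := hdam3 _ ((hp _).1 h1)
      have := cyc_pred_deg_two hc h3
      rwa [zadd14] at this
  -- closed nbhd of a centre
  have hclosed : ∀ j, deg G (c j) = 2 →
      closedNbhd G (c j) = {c j, c (j + 1), c (j + 4)} := by
    intro j hj
    rw [closedNbhd, show {u | G.Adj (c j) u} = nbhd G (c j) from rfl, cyc_nbhd hc hj]
  -- FragC ↔ ctrB
  have hfc : ∀ w, FragC G v c w ↔ ∃ j, w = c j ∧ ctrB p j = true := by
    intro w
    constructor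
    · rintro ⟨j, rfl, h1, h2⟩
      refine ⟨j, rfl, ctrB_of p j ((hp' j).2 h1) ?_⟩
      rcases h2 with h2 | ⟨h2, h3⟩
      · exact Or.inl ((hp _).2 h2)
      · exact Or.inr ⟨(hp _).2 h2, (hp' _).2 h3⟩
    · rintro ⟨j, rfl, h1⟩
      obtain ⟨h2, h3⟩ := ctrB_spec' p j h1
      refine ⟨j, rfl, (hp' j).1 h2, ?_⟩
      rcases h3 with h3 | ⟨h3, h4⟩
      · exact Or.inl ((hp _).1 h3)
      · exact Or.inr ⟨(hp _).1 h3, (hp' _).1 h4⟩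
  -- membership of a block, in terms of blkB
  have hblk : ∀ j, ctrB p j = true → ∀ u,
      (u ∈ Blk G (A \ N) (c j) ↔ ∃ k, u = c k ∧ blkB p j k = true) := by
    intro j hj u
    obtain ⟨hj0, hj1⟩ := ctrB_spec p j hj
    have hd2 := hdeg2 j hj0 hj1
    constructor
    · rintro ⟨hu1, hu2, hu3⟩
      rw [hclosed j hd2] at hu1
      rcases hu1 with rfl | rfl | rfl
      · exact ⟨j, rfl, blkB_of p j j ((hp' j).2 hu3) (Or.inl rfl)⟩
      · exact ⟨j + 1, rfl, blkB_of p j (j + 1) ((hp' _).2 hu3) (Or.inr (Or.inr rfl))⟩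
      · refine ⟨j - 1, by rw [zsub_one], blkB_of p j (j - 1) ?_ (Or.inr (Or.inl rfl))⟩
        rw [hp', zsub_one]; exact hu3
    · rintro ⟨k, rfl, hk⟩
      obtain ⟨hk0, hk1⟩ := blkB_spec p j k hk
      have hmem : c k ∈ closedNbhd G (c j) := by
        rw [hclosed j hd2]
        rcases hk1 with rfl | rfl | rfl
        · exact Or.inl rfl
        · right; right; rw [zsub_one]; exact rfl
        · exact Or.inr (Or.inl rfl)
      exact ⟨hmem, hcA ⟨k, rfl⟩, (hp' k).1 hk0⟩
  refine ⟨?_, ?_, ?_⟩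
  · -- properties of centres
    intro w hw
    rw [hfc] at hw
    obtain ⟨j, rfl, hj⟩ := hw
    obtain ⟨hj0, hj1⟩ := ctrB_spec p j hj
    have hd2 := hdeg2 j hj0 hj1
    refine ⟨⟨hcA ⟨j, rfl⟩, (hp' j).1 hj0⟩, ?_, ?_⟩
    · -- RelSimp: at most one neighbour survives
      intro u hu w' hw' hau haw' huw'
      exfalso
      have hnb : ∀ z, G.Adj (c j) z → z = c (j + 1) ∨ z = c (j + 4) := by
        intro z hz
        have hz' : z ∈ nbhd G (c j) := hz
        rw [cyc_nbhd hc hd2] at hz'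
        exact hz'
      have hone : c (j + 1) ∈ N ∨ c (j + 4) ∈ N := by
        rcases hj1 with h1 | h1
        · right
          have h2 := (hp _).1 h1
          rwa [zsub_one] at h2
        · exact Or.inl ((hp _).1 h1)
      rcases hnb u hau with rfl | rfl <;> rcases hnb w' haw' with rfl | rfl
      · exact huw' rfl
      · rcases hone with h | h
        · exact hu.2 h
        · exact hw'.2 h
      · rcases hone with h | h
        · exact hw'.2 h
        · exact hu.2 h
      · exact huw' rfl
    · intro u hu
      rw [hblk j hj] at hu
      obtain ⟨k, rfl, hk⟩ := hu
      exact ⟨⟨k, rfl⟩, (hp' k).1 (blkB_spec p j k hk).1⟩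
  · -- coverage
    rintro u ⟨k, rfl⟩ hu hdam
    obtain ⟨k', hk'⟩ := hdam
    obtain ⟨j, hj, hjk⟩ := ctrB_cover p ⟨k', (hp k').2 hk'⟩ nocons k ((hp' k).2 hu)
    exact ⟨c j, (hfc _).2 ⟨j, rfl, hj⟩, (hblk j hj _).2 ⟨k, rfl, hjk⟩⟩
  · -- disjointness
    intro w w' hw hw' u hu hu'
    rw [hfc] at hw hw'
    obtain ⟨j, rfl, hj⟩ := hw
    obtain ⟨j', rfl, hj'⟩ := hw'
    rw [hblk j hj] at hu
    rw [hblk j' hj'] at hu'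
    obtain ⟨k, rfl, hk⟩ := hu
    obtain ⟨k', he, hk'⟩ := hu'
    rw [← hc.1.1 he] at hk'
    rw [ctrB_disj p nocons j j' k hj hj' hk hk']

end Frag

lemma cyc_ne_self {c : ZMod 5 → V} (hc : IsBasic5Cycle G c) (i : ZMod 5)
    {d : ZMod 5} (hd : d ≠ 0) : c (i + d) ≠ c i := by
  intro he
  have h := hc.1.1 he
  have h2 : i + d = i + 0 := by rw [add_zero]; exact h
  exact hd (add_left_cancel h2)

section Shed

lemma isIndep_insert {S : Set V} {a : V} (hS : IsIndep G S)
    (h : ∀ s ∈ S, ¬ G.Adj a s) : IsIndep G (insert a S) := by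
  intro u hu w hw
  rcases hu with rfl | hu <;> rcases hw with rfl | hw
  · exact fun hadj => G.irrefl hadj
  · exact h w hw
  · exact fun hadj => h u hu hadj.symm
  · exact hS u hu w hw

/-- Shedding at a neighbour of a relatively simplicial vertex. -/
lemma shed_clique {A : Set V} {x v : V} (hxA : x ∈ A) (hrs : RelSimp G A x)
    (hvA : v ∈ A) (hadj : G.Adj x v) :
    ∀ S : Set V, IsIndepOn G (A \ closedNbhd G v) S →
      ¬ IsMaxIndepOn G (A \ {v}) S := by
  intro S hS hM
  have hxv : x ≠ v := fun he => G.irrefl (he ▸ hadj)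
  have hxS : x ∉ S := fun hx => (hS.1 hx).2 (adj_mem_closedNbhd hadj.symm)
  have hT : IsIndepOn G (A \ {v}) (insert x S) := by
    constructor
    · rintro u (rfl | hu)
      · exact ⟨hxA, hxv⟩
      · exact ⟨(hS.1 hu).1, fun he => (hS.1 hu).2 (he ▸ self_mem_closedNbhd G v)⟩
    · refine isIndep_insert hS.2 ?_
      intro s hs hadj'
      have hsA : s ∈ A := (hS.1 hs).1
      have hsv : s ≠ v := fun he => (hS.1 hs).2 (he ▸ self_mem_closedNbhd G v)
      exact (hS.1 hs).2 (adj_mem_closedNbhd (hrs s hsA v hvA hadj' hadj hsv).symm)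
  have := hM.2 _ hT (Set.subset_insert x S)
  exact hxS (this ▸ Set.mem_insert x S)

/-- Shedding at a cycle vertex whose two cycle neighbours have degree 2. -/
lemma shed_cycle {A : Set V} {c : ZMod 5 → V} {i : ZMod 5}
    (hc : IsBasic5Cycle G c) (hcA : Set.range c ⊆ A)
    (h1 : deg G (c (i + 1)) = 2) (h4 : deg G (c (i + 4)) = 2) :
    ∀ S : Set V, IsIndepOn G (A \ closedNbhd G (c i)) S →
      ¬ IsMaxIndepOn G (A \ {c i}) S := by
  intro S hS hM
  have hSN : ∀ u ∈ S, u ∉ closedNbhd G (c i) := fun u hu => (hS.1 hu).2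
  have hSA : ∀ u ∈ S, u ∈ A := fun u hu => (hS.1 hu).1
  have hadd : ∀ a, a ∈ Set.range c → a ≠ c i → a ∈ closedNbhd G (c i) →
      (∀ s ∈ S, ¬ G.Adj a s) → False := by
    intro a ha hane haN hind
    have haS : a ∉ S := fun h => hSN a h haN
    have hT : IsIndepOn G (A \ {c i}) (insert a S) := by
      constructor
      · rintro u (rfl | hu)
        · exact ⟨hcA ha, fun he => hane (Set.mem_singleton_iff.1 he)⟩
        · exact ⟨hSA u hu, fun he => hSN u hu (Set.mem_singleton_iff.1 he ▸
            self_mem_closedNbhd G (c i))⟩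
      · exact isIndep_insert hS.2 hind
    have := hM.2 _ hT (Set.subset_insert a S)
    exact haS (this ▸ Set.mem_insert a S)
  by_cases hq : c (i + 2) ∈ S
  · -- add c (i + 4)
    refine hadd (c (i + 4)) ⟨_, rfl⟩ (cyc_ne_self hc i (by decide))
      (adj_mem_closedNbhd (cyc_adj_pred hc i)) ?_
    intro s hs hadj
    have : s ∈ nbhd G (c (i + 4)) := hadj
    rw [cyc_nbhd hc h4] at this
    rcases this with rfl | rfl
    · -- s = c (i + 4 + 1) = c i
      have h45 : i + 4 + 1 = i := by
        have h5 : (4 : ZMod 5) + 1 = 0 := by decide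
        rw [add_assoc, h5, add_zero]
      rw [h45] at hs
      exact hSN _ hs (self_mem_closedNbhd G (c i))
    · -- s = c (i + 4 + 4) = c (i + 3), adjacent to c (i + 2) ∈ S
      have h44 : i + 4 + 4 = i + 3 := by
        have h8 : (4 : ZMod 5) + 4 = 3 := by decide
        rw [add_assoc, h8]
      rw [h44] at hs
      have := cyc_adj hc (i + 2)
      rw [show i + 2 + 1 = i + 3 by rw [add_assoc]; norm_num] at this
      exact hS.2 _ hq _ hs this
  · -- add c (i + 1)
    refine hadd (c (i + 1)) ⟨_, rfl⟩ (cyc_ne_self hc i (by decide))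
      (adj_mem_closedNbhd (cyc_adj hc i)) ?_
    intro s hs hadj
    have : s ∈ nbhd G (c (i + 1)) := hadj
    rw [cyc_nbhd hc h1] at this
    rcases this with rfl | rfl
    · -- s = c (i + 1 + 1) = c (i + 2) ∉ S
      have h11 : i + 1 + 1 = i + 2 := by rw [add_assoc]; norm_num
      rw [h11] at hs
      exact hq hs
    · -- s = c (i + 1 + 4) = c i
      rw [zadd14] at hs
      exact hSN _ hs (self_mem_closedNbhd G (c i))

/-- If a centre is in `N[v]` then its whole block is. -/
lemma blk_subset_closedNbhd {A : Set V} {x v : V} (hvA : v ∈ A)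
    (hrs : RelSimp G A x) (hx : x ∈ closedNbhd G v) :
    Blk G A x ⊆ closedNbhd G v := by
  rintro u ⟨hu1, hu2⟩
  rcases mem_closedNbhd_iff.1 hu1 with rfl | hxu
  · exact hx
  rcases mem_closedNbhd_iff.1 hx with rfl | hvx
  · exact adj_mem_closedNbhd hxu
  by_cases huv : u = v
  · exact huv ▸ self_mem_closedNbhd G v
  · exact adj_mem_closedNbhd (hrs u hu2 v hvA hxu hvx.symm huv).symm

end Shed

lemma zadd_add (i : ZMod 5) {a b d : ZMod 5} (h : a + b = d) : i + a + b = i + d := by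
  rw [add_assoc, h]

section Preserve

variable {A X : Set V} {CS : Set (ZMod 5 → V)}

lemma good_del_clique (hG : GoodData G A X CS) {x v : V} (hx : x ∈ X)
    (hvA : v ∈ A) (hadj : G.Adj x v) : GoodData G (A \ {v}) X CS := by
  have hvBlk : v ∈ Blk G A x := ⟨adj_mem_closedNbhd hadj, hvA⟩
  have hvX : ∀ x' ∈ X, x' ≠ v := by
    intro x' hx' he
    subst he
    have h := hG.dXX x hx x' hx' x' hvBlk (self_mem_blk (hG.hX x' hx').1)
    exact G.irrefl (h ▸ hadj)
  have hvC : ∀ c ∈ CS, v ∉ Set.range c := fun c hc => hG.dXC x hx c hc v hvBlk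
  have hsub : A \ {v} ⊆ A := Set.diff_subset
  refine ⟨?_, ?_, ?_, ?_, ?_, ?_⟩
  · intro x' hx'
    exact ⟨⟨(hG.hX x' hx').1, fun he => hvX x' hx' (Set.mem_singleton_iff.1 he)⟩,
      relSimp_mono hsub (hG.hX x' hx').2⟩
  · intro c hc
    refine ⟨(hG.hCS c hc).1, fun u hu => ⟨(hG.hCS c hc).2 hu, fun he => ?_⟩⟩
    exact hvC c hc (Set.mem_singleton_iff.1 he ▸ hu)
  · rintro u ⟨huA, huv⟩
    rcases hG.cover u huA with ⟨x', hx', hu⟩ | ⟨c, hc, hu⟩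
    · exact Or.inl ⟨x', hx', hu.1, huA, huv⟩
    · exact Or.inr ⟨c, hc, hu⟩
  · intro a ha b hb u hu hu'
    exact hG.dXX a ha b hb u (blk_mono hsub a hu) (blk_mono hsub b hu')
  · exact fun c hc c' hc' u hu hu' => hG.dCC c hc c' hc' u hu hu'
  · intro a ha c hc u hu
    exact hG.dXC a ha c hc u (blk_mono hsub a hu)

lemma good_del_cycle (hG : GoodData G A X CS) {c₀ : ZMod 5 → V} (hc₀ : c₀ ∈ CS)
    (i : ZMod 5) (h1 : deg G (c₀ (i + 1)) = 2) (h4 : deg G (c₀ (i + 4)) = 2) :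
    GoodData G (A \ {c₀ i}) (X ∪ {c₀ (i + 1), c₀ (i + 4)}) {c ∈ CS | c ≠ c₀} := by
  have hbasic : IsBasic5Cycle G c₀ := (hG.hCS c₀ hc₀).1
  have hrA : Set.range c₀ ⊆ A := (hG.hCS c₀ hc₀).2
  set v := c₀ i with hv
  have hsub : A \ {v} ⊆ A := Set.diff_subset
  have hXnc : ∀ x ∈ X, ∀ u, u ∈ Blk G A x → u ∉ Set.range c₀ :=
    fun x hx u hu => hG.dXC x hx c₀ hc₀ u hu
  have hXv : ∀ x ∈ X, x ≠ v := fun x hx he =>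
    hXnc x hx x (self_mem_blk (hG.hX x hx).1) (he ▸ ⟨i, rfl⟩)
  have hnotX : ∀ k : ZMod 5, c₀ k ∉ X := fun k hk =>
    hXnc _ hk _ (self_mem_blk (hG.hX _ hk).1) ⟨k, rfl⟩
  -- neighbourhood facts for the two new centres
  have hn1 : nbhd G (c₀ (i + 1)) = {c₀ (i + 2), c₀ i} := by
    rw [cyc_nbhd hbasic h1, zadd_add i (show (1:ZMod 5)+1 = 2 by decide),
      zadd_add i (show (1:ZMod 5)+4 = 0 by decide), add_zero]
  have hn4 : nbhd G (c₀ (i + 4)) = {c₀ i, c₀ (i + 3)} := by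
    rw [cyc_nbhd hbasic h4, zadd_add i (show (4:ZMod 5)+1 = 0 by decide),
      zadd_add i (show (4:ZMod 5)+4 = 3 by decide), add_zero]
  have hblk1 : Blk G (A \ {v}) (c₀ (i + 1)) ⊆ {c₀ (i + 1), c₀ (i + 2)} := by
    rintro u ⟨hu1, hu2, hu3⟩
    rcases mem_closedNbhd_iff.1 hu1 with rfl | hadj
    · exact Or.inl rfl
    · have : u ∈ nbhd G (c₀ (i + 1)) := hadj
      rw [hn1] at this
      rcases this with rfl | rfl
      · exact Or.inr rfl
      · exact absurd rfl hu3
  have hblk4 : Blk G (A \ {v}) (c₀ (i + 4)) ⊆ {c₀ (i + 4), c₀ (i + 3)} := by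
    rintro u ⟨hu1, hu2, hu3⟩
    rcases mem_closedNbhd_iff.1 hu1 with rfl | hadj
    · exact Or.inl rfl
    · have : u ∈ nbhd G (c₀ (i + 4)) := hadj
      rw [hn4] at this
      rcases this with rfl | rfl
      · exact absurd rfl hu3
      · exact Or.inr rfl
  have hne_i : ∀ d : ZMod 5, d ≠ 0 → c₀ (i + d) ≠ v := fun d hd => cyc_ne_self hbasic i hd
  have hmemA' : ∀ d : ZMod 5, d ≠ 0 → c₀ (i + d) ∈ A \ {v} :=
    fun d hd => ⟨hrA ⟨_, rfl⟩, fun he => hne_i d hd (Set.mem_singleton_iff.1 he)⟩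
  have hrs1 : RelSimp G (A \ {v}) (c₀ (i + 1)) := by
    intro u hu w hw hau haw huw
    exfalso
    have hu' : u ∈ nbhd G (c₀ (i+1)) := hau
    have hw' : w ∈ nbhd G (c₀ (i+1)) := haw
    rw [hn1] at hu' hw'
    rcases hu' with rfl | rfl
    · rcases hw' with rfl | rfl
      · exact huw rfl
      · exact hw.2 rfl
    · exact hu.2 rfl
  have hrs4 : RelSimp G (A \ {v}) (c₀ (i + 4)) := by
    intro u hu w hw hau haw huw
    exfalso
    have hu' : u ∈ nbhd G (c₀ (i+4)) := hau
    have hw' : w ∈ nbhd G (c₀ (i+4)) := haw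
    rw [hn4] at hu' hw'
    rcases hu' with rfl | rfl
    · exact hu.2 rfl
    · rcases hw' with rfl | rfl
      · exact hw.2 rfl
      · exact huw rfl
  refine ⟨?_, ?_, ?_, ?_, ?_, ?_⟩
  · rintro x (hx | hx)
    · exact ⟨⟨(hG.hX x hx).1, fun he => hXv x hx (Set.mem_singleton_iff.1 he)⟩,
        relSimp_mono hsub (hG.hX x hx).2⟩
    · rcases hx with rfl | hx
      · exact ⟨hmemA' 1 (by decide), hrs1⟩
      · rw [Set.mem_singleton_iff] at hx
        subst hx
        exact ⟨hmemA' 4 (by decide), hrs4⟩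
  · rintro c ⟨hc, hcne⟩
    refine ⟨(hG.hCS c hc).1, fun u hu => ⟨(hG.hCS c hc).2 hu, fun he => ?_⟩⟩
    rw [Set.mem_singleton_iff] at he
    subst he
    exact hcne (hG.dCC c hc c₀ hc₀ v hu ⟨i, rfl⟩)
  · rintro u ⟨huA, huv⟩
    rcases hG.cover u huA with ⟨x', hx', hu⟩ | ⟨c, hc, hu⟩
    · exact Or.inl ⟨x', Or.inl hx', hu.1, huA, huv⟩
    · by_cases hcc : c = c₀
      · rw [hcc] at hu
        obtain ⟨k, rfl⟩ := hu
        left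
        rcases zmod5_cases i k with rfl | rfl | rfl | rfl | rfl
        · exact absurd rfl huv
        · exact ⟨c₀ (i+1), Or.inr (Or.inl rfl), self_mem_blk ⟨huA, huv⟩⟩
        · refine ⟨c₀ (i+1), Or.inr (Or.inl rfl), ?_, huA, huv⟩
          refine adj_mem_closedNbhd ?_
          show c₀ (i + 2) ∈ nbhd G (c₀ (i+1))
          rw [hn1]; exact Or.inl rfl
        · refine ⟨c₀ (i+4), Or.inr (Or.inr rfl), ?_, huA, huv⟩
          refine adj_mem_closedNbhd ?_
          show c₀ (i + 3) ∈ nbhd G (c₀ (i+4))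
          rw [hn4]; exact Or.inr rfl
        · exact ⟨c₀ (i+4), Or.inr (Or.inr rfl), self_mem_blk ⟨huA, huv⟩⟩
      · exact Or.inr ⟨c, ⟨hc, hcc⟩, hu⟩
  · -- dXX
    have key14 : ∀ u, u ∈ Blk G (A \ {v}) (c₀ (i+1)) → u ∈ Blk G (A \ {v}) (c₀ (i+4)) →
        False := by
      intro u hu hu'
      rcases hblk1 hu with rfl | rfl <;> rcases hblk4 hu' with he | he <;>
        [skip; skip; skip; skip] <;>
        exact absurd (hbasic.1.1 he)
          (by intro h; exact absurd (add_left_cancel h) (by decide))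
    rintro a (ha | ha) b (hb | hb) u hu hu'
    · exact hG.dXX a ha b hb u (blk_mono hsub a hu) (blk_mono hsub b hu')
    · exfalso
      refine hXnc a ha u (blk_mono hsub a hu) ?_
      rcases hb with rfl | hb
      · rcases hblk1 hu' with rfl | rfl
        · exact ⟨i+1, rfl⟩
        · exact ⟨i+2, rfl⟩
      · rw [Set.mem_singleton_iff] at hb; subst hb
        rcases hblk4 hu' with rfl | rfl
        · exact ⟨i+4, rfl⟩
        · exact ⟨i+3, rfl⟩
    · exfalso
      refine hXnc b hb u (blk_mono hsub b hu') ?_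
      rcases ha with rfl | ha
      · rcases hblk1 hu with rfl | rfl
        · exact ⟨i+1, rfl⟩
        · exact ⟨i+2, rfl⟩
      · rw [Set.mem_singleton_iff] at ha; subst ha
        rcases hblk4 hu with rfl | rfl
        · exact ⟨i+4, rfl⟩
        · exact ⟨i+3, rfl⟩
    · rcases ha with rfl | ha <;> rcases hb with rfl | hb
      · rfl
      · rw [Set.mem_singleton_iff] at hb; subst hb
        exact absurd (key14 u hu hu') id
      · rw [Set.mem_singleton_iff] at ha; subst ha
        exact absurd (key14 u hu' hu) id
      · rw [Set.mem_singleton_iff] at ha hb; rw [ha, hb]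
  · rintro c ⟨hc, _⟩ c' ⟨hc', _⟩ u hu hu'
    exact hG.dCC c hc c' hc' u hu hu'
  · rintro a (ha | ha) c ⟨hc, hcne⟩ u hu hu'
    · exact hG.dXC a ha c hc u (blk_mono hsub a hu) hu'
    · refine hcne (hG.dCC c hc c₀ hc₀ u hu' ?_)
      rcases ha with rfl | ha
      · rcases hblk1 hu with rfl | rfl
        · exact ⟨i+1, rfl⟩
        · exact ⟨i+2, rfl⟩
      · rw [Set.mem_singleton_iff] at ha; subst ha
        rcases hblk4 hu with rfl | rfl
        · exact ⟨i+4, rfl⟩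
        · exact ⟨i+3, rfl⟩

lemma fragC_damaged {v : V} {c : ZMod 5 → V} {w : V} (h : FragC G v c w) :
    ∃ k, c k ∈ closedNbhd G v := by
  obtain ⟨j, _, _, h2 | ⟨h2, _⟩⟩ := h
  · exact ⟨j - 1, h2⟩
  · exact ⟨j + 1, h2⟩

lemma good_nbhd_clique (hG : GoodData G A X CS) {x v : V} (hx : x ∈ X)
    (hvA : v ∈ A) (hadj : G.Adj x v) :
    GoodData G (A \ closedNbhd G v)
      ({x' ∈ X | x' ∉ closedNbhd G v} ∪ {w | ∃ c ∈ CS, FragC G v c w})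
      {c ∈ CS | ∀ u ∈ Set.range c, u ∉ closedNbhd G v} := by
  set N := closedNbhd G v with hN
  have hsub : A \ N ⊆ A := Set.diff_subset
  have hvBlk : v ∈ Blk G A x := ⟨adj_mem_closedNbhd hadj, hvA⟩
  have hvC : ∀ c ∈ CS, v ∉ Set.range c := fun c hc => hG.dXC x hx c hc v hvBlk
  have F := fun c (hc : c ∈ CS) =>
    frag_all (G := G) (A := A) (v := v) (hG.hCS c hc).1 (hG.hCS c hc).2 (hvC c hc)
  have hfr : ∀ c ∈ CS, ∀ w, FragC G v c w → w ∈ Set.range c := by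
    rintro c hc w ⟨j, rfl, _⟩
    exact ⟨j, rfl⟩
  have hrem : ∀ x' ∈ X, x' ∈ N → ∀ u, u ∈ Blk G A x' → u ∈ N :=
    fun x' hx' hxN u hu => blk_subset_closedNbhd hvA (hG.hX x' hx').2 hxN hu
  refine ⟨?_, ?_, ?_, ?_, ?_, ?_⟩
  · rintro x' (⟨hx', hxN⟩ | ⟨c, hc, hw⟩)
    · exact ⟨⟨(hG.hX x' hx').1, hxN⟩, relSimp_mono hsub (hG.hX x' hx').2⟩
    · obtain ⟨h1, h2, _⟩ := (F c hc).1 x' hw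
      exact ⟨h1, h2⟩
  · rintro c ⟨hc, hcN⟩
    exact ⟨(hG.hCS c hc).1, fun u hu => ⟨(hG.hCS c hc).2 hu, hcN u hu⟩⟩
  · rintro u ⟨huA, huN⟩
    rcases hG.cover u huA with ⟨x', hx', hu⟩ | ⟨c, hc, hu⟩
    · by_cases hxN : x' ∈ N
      · exact absurd (hrem x' hx' hxN u hu) huN
      · exact Or.inl ⟨x', Or.inl ⟨hx', hxN⟩, hu.1, huA, huN⟩
    · by_cases hdam : ∃ k, c k ∈ N
      · obtain ⟨w, hw, hu'⟩ := (F c hc).2.1 u hu huN hdam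
        exact Or.inl ⟨w, Or.inr ⟨c, hc, hw⟩, hu'⟩
      · refine Or.inr ⟨c, ⟨hc, ?_⟩, hu⟩
        rintro u' ⟨k, rfl⟩ hk
        exact hdam ⟨k, hk⟩
  · rintro a (⟨ha, haN⟩ | ⟨c, hc, hw⟩) b (⟨hb, hbN⟩ | ⟨c', hc', hw'⟩) u hu hu'
    · exact hG.dXX a ha b hb u (blk_mono hsub a hu) (blk_mono hsub b hu')
    · exfalso
      have h1 := ((F c' hc').1 b hw').2.2 hu'
      exact hG.dXC a ha c' hc' u (blk_mono hsub a hu) h1.1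
    · exfalso
      have h1 := ((F c hc).1 a hw).2.2 hu
      exact hG.dXC b hb c hc u (blk_mono hsub b hu') h1.1
    · by_cases hcc : c = c'
      · subst hcc
        exact (F c hc).2.2 a b hw hw' u hu hu'
      · exfalso
        have h1 := ((F c hc).1 a hw).2.2 hu
        have h2 := ((F c' hc').1 b hw').2.2 hu'
        exact hcc (hG.dCC c hc c' hc' u h1.1 h2.1)
  · rintro c ⟨hc, _⟩ c' ⟨hc', _⟩ u hu hu'
    exact hG.dCC c hc c' hc' u hu hu'
  · rintro a (⟨ha, haN⟩ | ⟨c', hc', hw⟩) c ⟨hc, hcN⟩ u hu hu'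
    · exact hG.dXC a ha c hc u (blk_mono hsub a hu) hu'
    · have h1 := ((F c' hc').1 a hw).2.2 hu
      have hcc : c' = c := hG.dCC c' hc' c hc u h1.1 hu'
      subst hcc
      obtain ⟨k, hk⟩ := fragC_damaged hw
      exact hcN (c' k) ⟨k, rfl⟩ hk

/-- Replacement centres for the processed cycle itself under `N[v]`-deletion. -/
def OwnC (G : SimpleGraph V) (c₀ : ZMod 5 → V) (i : ZMod 5) : Set V :=
  {w | (w = c₀ (i+2) ∧ w ∉ closedNbhd G (c₀ i) ∧ deg G w = 2) ∨
       (w = c₀ (i+3) ∧ w ∉ closedNbhd G (c₀ i) ∧ deg G w = 2 ∧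
         (c₀ (i+2) ∈ closedNbhd G (c₀ i) ∨ deg G (c₀ (i+2)) ≠ 2))}

lemma good_nbhd_cycle (hG : GoodData G A X CS) {c₀ : ZMod 5 → V} (hc₀ : c₀ ∈ CS)
    (i : ZMod 5) (h1 : deg G (c₀ (i + 1)) = 2) (h4 : deg G (c₀ (i + 4)) = 2) :
    GoodData G (A \ closedNbhd G (c₀ i))
      (({x' ∈ X | x' ∉ closedNbhd G (c₀ i)} ∪
        {w | ∃ c ∈ CS, c ≠ c₀ ∧ FragC G (c₀ i) c w}) ∪ OwnC G c₀ i)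
      {c ∈ CS | c ≠ c₀ ∧ ∀ u ∈ Set.range c, u ∉ closedNbhd G (c₀ i)} := by
  have hbasic : IsBasic5Cycle G c₀ := (hG.hCS c₀ hc₀).1
  have hrA : Set.range c₀ ⊆ A := (hG.hCS c₀ hc₀).2
  set v := c₀ i with hvdef
  set N := closedNbhd G v with hNdef
  have hvA : v ∈ A := hrA ⟨i, rfl⟩
  have hsub : A \ N ⊆ A := Set.diff_subset
  have hvC : ∀ c ∈ CS, c ≠ c₀ → v ∉ Set.range c := by
    intro c hc hne hv
    exact hne (hG.dCC c hc c₀ hc₀ v hv ⟨i, rfl⟩)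
  have F := fun c (hc : c ∈ CS) (hne : c ≠ c₀) =>
    frag_all (G := G) (A := A) (v := v) (hG.hCS c hc).1 (hG.hCS c hc).2 (hvC c hc hne)
  have hrem : ∀ x' ∈ X, x' ∈ N → ∀ u, u ∈ Blk G A x' → u ∈ N :=
    fun x' hx' hxN u hu => blk_subset_closedNbhd hvA (hG.hX x' hx').2 hxN hu
  -- cycle offset adjacency facts
  have h1N : c₀ (i+1) ∈ N := adj_mem_closedNbhd (cyc_adj hbasic i)
  have h4N : c₀ (i+4) ∈ N := adj_mem_closedNbhd (cyc_adj_pred hbasic i)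
  have hvN : v ∈ N := self_mem_closedNbhd G v
  have ha23 : G.Adj (c₀ (i+2)) (c₀ (i+3)) := by
    have := cyc_adj hbasic (i+2)
    rwa [zadd_add i (show (2:ZMod 5)+1 = 3 by decide)] at this
  have ha21 : G.Adj (c₀ (i+2)) (c₀ (i+1)) := by
    have := cyc_adj_pred hbasic (i+2)
    rwa [zadd_add i (show (2:ZMod 5)+4 = 1 by decide)] at this
  have ha34 : G.Adj (c₀ (i+3)) (c₀ (i+4)) := by
    have := cyc_adj hbasic (i+3)
    rwa [zadd_add i (show (3:ZMod 5)+1 = 4 by decide)] at this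
  have hne' : ∀ {a b : ZMod 5}, a ≠ b → c₀ (i + a) ≠ c₀ (i + b) := by
    intro a b hab he
    exact hab (add_left_cancel (hbasic.1.1 he))
  have hnei : ∀ {a : ZMod 5}, a ≠ 0 → c₀ (i + a) ≠ v := fun h => cyc_ne_self hbasic i h
  have hn2 : deg G (c₀ (i+2)) = 2 → nbhd G (c₀ (i+2)) = {c₀ (i+3), c₀ (i+1)} := by
    intro hd
    rw [cyc_nbhd hbasic hd, zadd_add i (show (2:ZMod 5)+1 = 3 by decide),
      zadd_add i (show (2:ZMod 5)+4 = 1 by decide)]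
  have hn3 : deg G (c₀ (i+3)) = 2 → nbhd G (c₀ (i+3)) = {c₀ (i+4), c₀ (i+2)} := by
    intro hd
    rw [cyc_nbhd hbasic hd, zadd_add i (show (3:ZMod 5)+1 = 4 by decide),
      zadd_add i (show (3:ZMod 5)+4 = 2 by decide)]
  -- membership in N forces degree ≥ 3 for the two middle vertices
  have hd23 : c₀ (i+2) ∈ N → 3 ≤ deg G (c₀ (i+2)) := by
    intro h
    rcases mem_closedNbhd_iff.1 h with he | ha
    · exact absurd he (hnei (by decide))
    · exact three_le_deg ha21 ha23 ha.symm (hne' (by decide)) (hnei (by decide))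
        (hnei (by decide))
  have hd33 : c₀ (i+3) ∈ N → 3 ≤ deg G (c₀ (i+3)) := by
    intro h
    rcases mem_closedNbhd_iff.1 h with he | ha
    · exact absurd he (hnei (by decide))
    · exact three_le_deg ha34 ha23.symm ha.symm (hne' (by decide)) (hnei (by decide))
        (hnei (by decide))
  -- properties of own centres
  have hOwn_spec : ∀ w ∈ OwnC G c₀ i, w ∈ A \ N ∧ RelSimp G (A \ N) w ∧
      Blk G (A \ N) w ⊆ ({c₀ (i+2), c₀ (i+3)} : Set V) := by
    rintro w (⟨rfl, hwN, hwd⟩ | ⟨rfl, hwN, hwd, _⟩)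
    · refine ⟨⟨hrA ⟨i+2, rfl⟩, hwN⟩, ?_, ?_⟩
      · intro u hu w' hw' hau haw' huw'
        exfalso
        have hu' : u ∈ nbhd G (c₀ (i+2)) := hau
        have hw'' : w' ∈ nbhd G (c₀ (i+2)) := haw'
        rw [hn2 hwd] at hu' hw''
        rcases hu' with rfl | rfl
        · rcases hw'' with rfl | rfl
          · exact huw' rfl
          · exact hw'.2 h1N
        · exact hu.2 h1N
      · rintro u ⟨hu1, _, hu3⟩
        rcases mem_closedNbhd_iff.1 hu1 with rfl | ha
        · exact Or.inl rfl
        · have : u ∈ nbhd G (c₀ (i+2)) := ha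
          rw [hn2 hwd] at this
          rcases this with rfl | rfl
          · exact Or.inr rfl
          · exact absurd h1N hu3
    · refine ⟨⟨hrA ⟨i+3, rfl⟩, hwN⟩, ?_, ?_⟩
      · intro u hu w' hw' hau haw' huw'
        exfalso
        have hu' : u ∈ nbhd G (c₀ (i+3)) := hau
        have hw'' : w' ∈ nbhd G (c₀ (i+3)) := haw'
        rw [hn3 hwd] at hu' hw''
        rcases hu' with rfl | rfl
        · exact hu.2 h4N
        · rcases hw'' with rfl | rfl
          · exact hw'.2 h4N
          · exact huw' rfl
      · rintro u ⟨hu1, _, hu3⟩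
        rcases mem_closedNbhd_iff.1 hu1 with rfl | ha
        · exact Or.inr rfl
        · have : u ∈ nbhd G (c₀ (i+3)) := ha
          rw [hn3 hwd] at this
          rcases this with rfl | rfl
          · exact absurd h4N hu3
          · exact Or.inl rfl
  have hOwn_unique : ∀ w ∈ OwnC G c₀ i, ∀ w' ∈ OwnC G c₀ i, w = w' := by
    rintro w (⟨rfl, hwN, hwd⟩ | ⟨rfl, hwN, hwd, hcond⟩) w'
        (⟨rfl, hwN', hwd'⟩ | ⟨rfl, hwN', hwd', hcond'⟩)
    · rfl
    · rcases hcond' with h | h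
      · exact absurd h hwN
      · exact absurd hwd h
    · rcases hcond with h | h
      · exact absurd h hwN'
      · exact absurd hwd' h
    · rfl
  -- coverage of the surviving part of the processed cycle
  have hown_cover : ∀ k, c₀ k ∉ N → ∃ w ∈ OwnC G c₀ i, c₀ k ∈ Blk G (A \ N) w := by
    intro k hk
    rcases zmod5_cases i k with rfl | rfl | rfl | rfl | rfl
    · exact absurd hvN hk
    · exact absurd h1N hk
    · by_cases hd : deg G (c₀ (i+2)) = 2
      · exact ⟨c₀ (i+2), Or.inl ⟨rfl, hk, hd⟩,
          self_mem_blk ⟨hrA ⟨i+2, rfl⟩, hk⟩⟩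
      · have h3 : 3 ≤ deg G (c₀ (i+2)) := by
          have := cyc_two_le_deg hbasic (i+2); omega
        have hd3 : deg G (c₀ (i+3)) = 2 := by
          have := cyc_succ_deg_two hbasic h3
          rwa [zadd_add i (show (2:ZMod 5)+1 = 3 by decide)] at this
        have hn3' : c₀ (i+3) ∉ N := fun h => by have := hd33 h; omega
        exact ⟨c₀ (i+3), Or.inr ⟨rfl, hn3', hd3, Or.inr hd⟩,
          ⟨adj_mem_closedNbhd ha23.symm, hrA ⟨i+2, rfl⟩, hk⟩⟩
    · by_cases hc2 : c₀ (i+2) ∉ N ∧ deg G (c₀ (i+2)) = 2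
      · exact ⟨c₀ (i+2), Or.inl ⟨rfl, hc2.1, hc2.2⟩,
          ⟨adj_mem_closedNbhd ha23, hrA ⟨i+3, rfl⟩, hk⟩⟩
      · have hdne : deg G (c₀ (i+2)) ≠ 2 := by
          intro hd
          by_cases hmem : c₀ (i+2) ∈ N
          · have := hd23 hmem; omega
          · exact hc2 ⟨hmem, hd⟩
        have h3 : 3 ≤ deg G (c₀ (i+2)) := by
          have := cyc_two_le_deg hbasic (i+2); omega
        have hd3 : deg G (c₀ (i+3)) = 2 := by
          have := cyc_succ_deg_two hbasic h3
          rwa [zadd_add i (show (2:ZMod 5)+1 = 3 by decide)] at this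
        exact ⟨c₀ (i+3), Or.inr ⟨rfl, hk, hd3, Or.inr hdne⟩,
          self_mem_blk ⟨hrA ⟨i+3, rfl⟩, hk⟩⟩
    · exact absurd h4N hk
  have hOwn_range : ∀ w ∈ OwnC G c₀ i, ∀ u, u ∈ Blk G (A \ N) w → u ∈ Set.range c₀ := by
    intro w hw u hu
    rcases (hOwn_spec w hw).2.2 hu with rfl | rfl
    · exact ⟨i+2, rfl⟩
    · exact ⟨i+3, rfl⟩
  have hfrin : ∀ c ∈ CS, ∀ hne : c ≠ c₀, ∀ w, FragC G v c w → ∀ u,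
      u ∈ Blk G (A \ N) w → u ∈ Set.range c := by
    intro c hc hne w hw u hu
    exact (((F c hc hne).1 w hw).2.2 hu).1
  refine ⟨?_, ?_, ?_, ?_, ?_, ?_⟩
  · rintro x' ((⟨hx', hxN⟩ | ⟨c, hc, hne, hw⟩) | hown)
    · exact ⟨⟨(hG.hX x' hx').1, hxN⟩, relSimp_mono hsub (hG.hX x' hx').2⟩
    · obtain ⟨ha, hb, _⟩ := (F c hc hne).1 x' hw
      exact ⟨ha, hb⟩
    · exact ⟨(hOwn_spec x' hown).1, (hOwn_spec x' hown).2.1⟩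
  · rintro c ⟨hc, _, hcN⟩
    exact ⟨(hG.hCS c hc).1, fun u hu => ⟨(hG.hCS c hc).2 hu, hcN u hu⟩⟩
  · rintro u ⟨huA, huN⟩
    rcases hG.cover u huA with ⟨x', hx', hu⟩ | ⟨c, hc, hu⟩
    · by_cases hxN : x' ∈ N
      · exact absurd (hrem x' hx' hxN u hu) huN
      · exact Or.inl ⟨x', Or.inl (Or.inl ⟨hx', hxN⟩), hu.1, huA, huN⟩
    · by_cases hcc : c = c₀
      · rw [hcc] at hu
        obtain ⟨k, rfl⟩ := hu
        obtain ⟨w, hw, hu'⟩ := hown_cover k huN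
        exact Or.inl ⟨w, Or.inr hw, hu'⟩
      · by_cases hdam : ∃ k, c k ∈ N
        · obtain ⟨w, hw, hu'⟩ := (F c hc hcc).2.1 u hu huN hdam
          exact Or.inl ⟨w, Or.inl (Or.inr ⟨c, hc, hcc, hw⟩), hu'⟩
        · refine Or.inr ⟨c, ⟨hc, hcc, ?_⟩, hu⟩
          rintro u' ⟨k, rfl⟩ hk
          exact hdam ⟨k, hk⟩
  · -- dXX
    have hKF : ∀ a, a ∈ X → ∀ c ∈ CS, ∀ hne : c ≠ c₀, ∀ w, FragC G v c w → ∀ u,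
        u ∈ Blk G (A \ N) a → u ∈ Blk G (A \ N) w → False := by
      intro a ha c hc hne w hw u hu hu'
      exact hG.dXC a ha c hc u (blk_mono hsub a hu) (hfrin c hc hne w hw u hu')
    have hKO : ∀ a, a ∈ X → ∀ w ∈ OwnC G c₀ i, ∀ u,
        u ∈ Blk G (A \ N) a → u ∈ Blk G (A \ N) w → False := by
      intro a ha w hw u hu hu'
      exact hG.dXC a ha c₀ hc₀ u (blk_mono hsub a hu) (hOwn_range w hw u hu')
    have hFO : ∀ c ∈ CS, ∀ hne : c ≠ c₀, ∀ w, FragC G v c w → ∀ w' ∈ OwnC G c₀ i,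
        ∀ u, u ∈ Blk G (A \ N) w → u ∈ Blk G (A \ N) w' → False := by
      intro c hc hne w hw w' hw' u hu hu'
      exact hne (hG.dCC c hc c₀ hc₀ u (hfrin c hc hne w hw u hu)
        (hOwn_range w' hw' u hu'))
    rintro a ((⟨ha, haN⟩ | ⟨c, hc, hne, hw⟩) | hown)
        b ((⟨hb, hbN⟩ | ⟨c', hc', hne', hw'⟩) | hown') u hu hu'
    · exact hG.dXX a ha b hb u (blk_mono hsub a hu) (blk_mono hsub b hu')
    · exact absurd (hKF a ha c' hc' hne' b hw' u hu hu') id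
    · exact absurd (hKO a ha b hown' u hu hu') id
    · exact absurd (hKF b hb c hc hne a hw u hu' hu) id
    · by_cases hcc : c = c'
      · subst hcc
        exact (F c hc hne).2.2 a b hw hw' u hu hu'
      · exfalso
        exact hcc (hG.dCC c hc c' hc' u (hfrin c hc hne a hw u hu)
          (hfrin c' hc' hne' b hw' u hu'))
    · exact absurd (hFO c hc hne a hw b hown' u hu hu') id
    · exact absurd (hKO b hb a hown u hu' hu) id
    · exact absurd (hFO c' hc' hne' b hw' a hown u hu' hu) id
    · exact hOwn_unique a hown b hown'
  · rintro c ⟨hc, _, _⟩ c' ⟨hc', _, _⟩ u hu hu'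
    exact hG.dCC c hc c' hc' u hu hu'
  · rintro a ((⟨ha, haN⟩ | ⟨c', hc', hne', hw⟩) | hown) c ⟨hc, hcne, hcN⟩ u hu hu'
    · exact hG.dXC a ha c hc u (blk_mono hsub a hu) hu'
    · have hcc : c' = c := hG.dCC c' hc' c hc u (hfrin c' hc' hne' a hw u hu) hu'
      subst hcc
      obtain ⟨k, hk⟩ := fragC_damaged hw
      exact hcN (c' k) ⟨k, rfl⟩ hk
    · exact hcne (hG.dCC c hc c₀ hc₀ u hu' (hOwn_range a hown u hu))

end Preserve

/-- Main induction: a good set is vertex decomposable. -/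
lemma good_vd : ∀ n (A : Set V), A.ncard ≤ n → Good G A → VDOn G A := by
  intro n
  induction n with
  | zero =>
    intro A hA _
    have hA0 : A = ∅ := (Set.ncard_eq_zero (Set.toFinite A)).1 (Nat.le_zero.1 hA)
    subst hA0
    exact VDOn.no_edges ∅ (by simp)
  | succ n ih =>
    intro A hA hGood
    obtain ⟨X, CS, hG⟩ := hGood
    by_cases hCS : ∃ c, c ∈ CS
    · obtain ⟨c₀, hc₀⟩ := hCS
      have hbasic := (hG.hCS c₀ hc₀).1
      obtain ⟨i, h1, h4⟩ : ∃ i, deg G (c₀ (i+1)) = 2 ∧ deg G (c₀ (i+4)) = 2 := by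
        by_cases h : ∃ k, 3 ≤ deg G (c₀ k)
        · obtain ⟨k, hk⟩ := h
          exact ⟨k, cyc_succ_deg_two hbasic hk, cyc_pred_deg_two hbasic hk⟩
        · push_neg at h
          exact ⟨0, cyc_deg_eq_two hbasic (by have := h (0+1); omega),
            cyc_deg_eq_two hbasic (by have := h (0+4); omega)⟩
      have hvA : c₀ i ∈ A := (hG.hCS c₀ hc₀).2 ⟨i, rfl⟩
      have hcard : (A \ {c₀ i}).ncard < A.ncard :=
        Set.ncard_diff_singleton_lt_of_mem hvA (Set.toFinite A)
      have hcard2 : (A \ closedNbhd G (c₀ i)).ncard ≤ (A \ {c₀ i}).ncard := by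
        refine Set.ncard_le_ncard (Set.diff_subset_diff_right ?_) (Set.toFinite _)
        simp only [Set.singleton_subset_iff]
        exact self_mem_closedNbhd G (c₀ i)
      refine VDOn.step A (c₀ i) hvA ?_ ?_ ?_
      · exact ih _ (by omega) ⟨_, _, good_del_cycle hG hc₀ i h1 h4⟩
      · exact ih _ (by omega) ⟨_, _, good_nbhd_cycle hG hc₀ i h1 h4⟩
      · exact shed_cycle hbasic (hG.hCS c₀ hc₀).2 h1 h4
    · by_cases hX : ∃ x ∈ X, ∃ w ∈ A, G.Adj x w
      · obtain ⟨x, hx, w, hwA, hadj⟩ := hX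
        have hcard : (A \ {w}).ncard < A.ncard :=
          Set.ncard_diff_singleton_lt_of_mem hwA (Set.toFinite A)
        have hcard2 : (A \ closedNbhd G w).ncard ≤ (A \ {w}).ncard := by
          refine Set.ncard_le_ncard (Set.diff_subset_diff_right ?_) (Set.toFinite _)
          simp only [Set.singleton_subset_iff]
          exact self_mem_closedNbhd G w
        refine VDOn.step A w hwA ?_ ?_ ?_
        · exact ih _ (by omega) ⟨_, _, good_del_clique hG hx hwA hadj⟩
        · exact ih _ (by omega) ⟨_, _, good_nbhd_clique hG hx hwA hadj⟩
        · exact shed_clique (hG.hX x hx).1 (hG.hX x hx).2 hwA hadj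
      · refine VDOn.no_edges A ?_
        intro u huA w hwA hadj
        rcases hG.cover u huA with ⟨x, hx, hu⟩ | ⟨c, hc, _⟩
        · rcases mem_closedNbhd_iff.1 hu.1 with rfl | hxu
          · exact hX ⟨u, hx, w, hwA, hadj⟩
          · exact hX ⟨x, hx, u, huA, hxu⟩
        · exact hCS ⟨c, hc⟩

/-- A graph in `SC` gives a good partition of the whole vertex set. -/
lemma inSC_good (h : InSC G) : Good G Set.univ := by
  obtain ⟨m, s, x, c, hsimp, hbasic, huniq⟩ := h
  refine ⟨Set.range x, Set.range c, ?_, ?_, ?_, ?_, ?_, ?_⟩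
  · rintro _ ⟨i, rfl⟩
    exact ⟨trivial, fun u _ w _ hu hw huw => hsimp i u w hu hw huw⟩
  · rintro _ ⟨j, rfl⟩
    exact ⟨hbasic j, fun _ _ => trivial⟩
  · intro v _
    obtain ⟨p, hp, _⟩ := huniq v
    match p, hp with
    | Sum.inl i, hp => exact Or.inl ⟨x i, ⟨i, rfl⟩, hp, trivial⟩
    | Sum.inr j, hp => exact Or.inr ⟨c j, ⟨j, rfl⟩, hp⟩
  · rintro _ ⟨i, rfl⟩ _ ⟨i', rfl⟩ u hu hu'
    obtain ⟨p, _, hup⟩ := huniq u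
    have e1 := hup (Sum.inl i) hu.1
    have e2 := hup (Sum.inl i') hu'.1
    cases e1.trans e2.symm
    rfl
  · rintro _ ⟨j, rfl⟩ _ ⟨j', rfl⟩ u hu hu'
    obtain ⟨p, _, hup⟩ := huniq u
    have e1 := hup (Sum.inr j) hu
    have e2 := hup (Sum.inr j') hu'
    cases e1.trans e2.symm
    rfl
  · rintro _ ⟨i, rfl⟩ _ ⟨j, rfl⟩ u hu hu'
    obtain ⟨p, _, hup⟩ := huniq u
    have e1 := hup (Sum.inl i) hu.1
    have e2 := hup (Sum.inr j) hu'
    cases e1.trans e2.symm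

end SCProof
/-- Every finite simple graph belonging to the class `SC` is
vertex decomposable. -/
theorem stmt1 {V : Type*} [Fintype V] (G : SimpleGraph V) (h : InSC G) :
    VertexDecomposable G :=
  good_vd Set.univ.ncard Set.univ le_rfl (inSC_good h)
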